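/- If the replacement rule represents neutral drift, then Δ̂_sel(x) = 0 for every state x ∈ {0,1}^G. Furthermore, if {ṽ_g}_{g∈G} is any weighting of the genetic sites such that the ṽ-weighted change due to selection Δ̃_sel(x) = Σ_{g,h∈G} x_g ( e°_{gh} ṽ_h − e°_{hg} ṽ_g ) is zero for every state x, then {ṽ_g}_{g∈G} is a constant multiple of the reproductive values {v_g}_{g∈G}. -/

import Mathlib

/-!
Common formal scaffold for "A mathematical formalism for natural selection
with arbitrary spatial and genetic structure" (Allen & McAvoy).

A population is a finite nonempty set `G` of genetic sites.  A state is a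
subset of `G` (the set of sites occupied by allele `A`); `∅` is the
monoallelic state `a` and `Finset.univ` is the monoallelic state `A`.
A replacement event is a pair `(R, α)` with `R ⊆ G` and `α : R → G`.
-/

open Filter Topology Set

namespace NatSel

variable (G : Type) [Fintype G] [DecidableEq G]

/-- A state of the population: the set of sites holding allele `A`. -/
abbrev PopState := Finset G

/-- A replacement event `(R, α)`: the replaced set `R ⊆ G` together with the
parentage map `α : R → G`. -/
abbrev RepEvent := Σ R : Finset G, (↥R → G)

variable {G}

/-- `x_g ∈ {0,1}` as a real number. -/
def xg (x : PopState G) (g : G) : ℝ := if g ∈ x then 1 else 0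

/-- `α̃` : agrees with `α` on `R`, is the identity off `R`. -/
def tildeMap (e : RepEvent G) (g : G) : G :=
  if h : g ∈ e.1 then e.2 ⟨g, h⟩ else g

/-- `p` is a replacement rule: for each state it gives a probability
distribution over replacement events. -/
def IsRule (p : PopState G → RepEvent G → ℝ) : Prop :=
  (∀ x e, 0 ≤ p x e) ∧ ∀ x, ∑ e : RepEvent G, p x e = 1

/-- The Fixation Axiom. -/
def FixationAxiom (p : PopState G → RepEvent G → ℝ) : Prop :=
  ∃ g : G, ∃ m : ℕ, 0 < m ∧ ∃ ev : Fin m → RepEvent G,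
    (∀ k, ∀ x : PopState G, 0 < p x (ev k)) ∧
    (∃ k, g ∈ (ev k).1) ∧
    (∀ h : G, (List.ofFn fun k => tildeMap (ev k)).foldr (· ∘ ·) id h = g)

/-- `e_{gh}(x)`: marginal probability that the allele in site `h` is replaced
by a copy of the allele in site `g`, in state `x`. -/
def eMarg (p : PopState G → RepEvent G → ℝ) (g h : G) (x : PopState G) : ℝ :=
  ∑ e : RepEvent G, if hh : h ∈ e.1 then (if e.2 ⟨h, hh⟩ = g then p x e else 0) else 0

/-- `b_g(x)`: expected offspring number (birth rate) of site `g` in state `x`. -/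
def bRate (p : PopState G → RepEvent G → ℝ) (g : G) (x : PopState G) : ℝ :=
  ∑ h, eMarg p g h x

/-- `d_g(x)`: death probability of site `g` in state `x`. -/
def dProb (p : PopState G → RepEvent G → ℝ) (g : G) (x : PopState G) : ℝ :=
  ∑ h, eMarg p h g x

/-- `b(x)`: total expected offspring number in state `x`. -/
def bTot (p : PopState G → RepEvent G → ℝ) (x : PopState G) : ℝ :=
  ∑ g, bRate p g x

/-- Probability that a replaced site whose parent holds allele `parent`
(`true` = `A`) acquires allele `child`, with mutation probability `u` and
mutational bias `ν`. -/
def siteProb (u ν : ℝ) (parent child : Bool) : ℝ :=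
  (if child = parent then 1 - u else 0) + (if child = true then u * ν else u * (1 - ν))

/-- One-step transition probability `P_{x → y}` of the evolutionary Markov
chain with replacement rule `p`, mutation probability `u`, mutational bias `ν`. -/
def step (p : PopState G → RepEvent G → ℝ) (u ν : ℝ) (x y : PopState G) : ℝ :=
  ∑ e : RepEvent G, p x e *
    (if y \ e.1 = x \ e.1 then
       ∏ g ∈ e.1.attach, siteProb u ν (decide (e.2 g ∈ x)) (decide (g.1 ∈ y))
     else 0)

/-- `t`-step transition probabilities of a kernel `P`. -/
def iterKer (P : PopState G → PopState G → ℝ) : ℕ → PopState G → PopState G → ℝ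
  | 0, x, y => if x = y then 1 else 0
  | (t + 1), x, y => ∑ z : PopState G, iterKer P t x z * P z y

/-- The state obtained from `x` by the (mutation-free) replacement event `e`. -/
def applyEvent (e : RepEvent G) (x : PopState G) : PopState G :=
  Finset.univ.filter fun g => tildeMap e g ∈ x

/-- One-step transition probability of the mutation-free (`u = 0`) chain. -/
def step0 (p : PopState G → RepEvent G → ℝ) (x y : PopState G) : ℝ :=
  ∑ e : RepEvent G, if y = applyEvent e x then p x e else 0

/-- The mutant appearance distribution `μ_A`: probability `d_g(a)/b(a)` on the
state `{g}`, for each `g ∈ G`. -/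
noncomputable def muA (p : PopState G → RepEvent G → ℝ) (x : PopState G) : ℝ :=
  ∑ g : G, if x = {g} then dProb p g ∅ / bTot p ∅ else 0

/-- The mutant appearance distribution `μ_a`: probability `d_g(A)/b(A)` on the
state `G \ {g}`, for each `g ∈ G`. -/
noncomputable def mua (p : PopState G → RepEvent G → ℝ) (x : PopState G) : ℝ :=
  ∑ g : G, if x = Finset.univ \ {g} then dProb p g Finset.univ / bTot p Finset.univ else 0

/-- Fixation probability `ρ_A` (computed at `u = 0`). -/
noncomputable def rhoA (p : PopState G → RepEvent G → ℝ) (ν : ℝ) : ℝ :=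
  ∑ x : PopState G, muA p x *
    limUnder atTop (fun t => iterKer (step p 0 ν) t x Finset.univ)

/-- Fixation probability `ρ_a` (computed at `u = 0`). -/
noncomputable def rhoa (p : PopState G → RepEvent G → ℝ) (ν : ℝ) : ℝ :=
  ∑ x : PopState G, mua p x *
    limUnder atTop (fun t => iterKer (step p 0 ν) t x ∅)

/-- Frequency `x = (1/n) Σ_g x_g` of allele `A`. -/
noncomputable def freq (x : PopState G) : ℝ := (x.card : ℝ) / (Fintype.card G : ℝ)

/-- Expected change due to selection, `Δ_sel(x) = Σ_g x_g (b_g(x) − d_g(x))`. -/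
def deltaSel (p : PopState G → RepEvent G → ℝ) (x : PopState G) : ℝ :=
  ∑ g, xg x g * (bRate p g x - dProb p g x)

/-- The finset of states other than the monoallelic states `a = ∅`, `A = univ`. -/
def offStates (G : Type) [Fintype G] [DecidableEq G] : Finset (PopState G) :=
  Finset.univ.filter fun x : PopState G => x ≠ ∅ ∧ x ≠ Finset.univ

/-- Assumption 1: consistency of monoallelic states. -/
def ConsistentMono (p : PopState G → RepEvent G → ℝ) : Prop :=
  ∀ e : RepEvent G, p ∅ e = p Finset.univ e

/-- A replacement rule represents neutral drift: probabilities are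
state-independent. -/
def NeutralDrift (p : PopState G → RepEvent G → ℝ) : Prop :=
  ∀ x e, p x e = p ∅ e

/-- Reproductive values: `{v_g}` solves `d°_g v_g = Σ_h e°_{gh} v_h` (with the
monoallelic-state quantities) together with `Σ_g v_g = n`. -/
def IsRepVal (p : PopState G → RepEvent G → ℝ) (v : G → ℝ) : Prop :=
  (∀ g, dProb p g ∅ * v g = ∑ h, eMarg p g h ∅ * v h) ∧
    ∑ g, v g = (Fintype.card G : ℝ)

/-- RV-weighted birth rate `b̂_g(x) = Σ_h e_{gh}(x) v_h`. -/
def bHat (p : PopState G → RepEvent G → ℝ) (v : G → ℝ) (g : G) (x : PopState G) : ℝ :=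
  ∑ h, eMarg p g h x * v h

/-- RV-weighted death rate `d̂_g(x) = v_g d_g(x)`. -/
def dHat (p : PopState G → RepEvent G → ℝ) (v : G → ℝ) (g : G) (x : PopState G) : ℝ :=
  v g * dProb p g x

/-- Total RV-weighted birth rate `b̂(x)`. -/
def bHatTot (p : PopState G → RepEvent G → ℝ) (v : G → ℝ) (x : PopState G) : ℝ :=
  ∑ g, bHat p v g x

/-- RV-weighted change due to selection `Δ̂_sel(x) = Σ_g x_g (b̂_g(x) − d̂_g(x))`. -/
def deltaHatSel (p : PopState G → RepEvent G → ℝ) (v : G → ℝ) (x : PopState G) : ℝ :=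
  ∑ g, xg x g * (bHat p v g x - dHat p v g x)

/-- Fitness `w_g(x) = v_g − d̂_g(x) + b̂_g(x)`. -/
def fitness (p : PopState G → RepEvent G → ℝ) (v : G → ℝ) (g : G) (x : PopState G) : ℝ :=
  v g - dHat p v g x + bHat p v g x

/-- RV-weighted frequency `x̂ = (1/n) Σ_g v_g x_g`. -/
noncomputable def freqHat (v : G → ℝ) (x : PopState G) : ℝ :=
  (∑ g, v g * xg x g) / (Fintype.card G : ℝ)

/-- `{π u}_{0<u≤1}` is, for each mutation probability `0 < u ≤ 1`, a stationary
distribution of the evolutionary Markov chain (i.e. the mutation-selection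
stationary distribution, which is unique by ergodicity). -/
def IsMSSFamily (p : PopState G → RepEvent G → ℝ) (ν : ℝ)
    (π : ℝ → PopState G → ℝ) : Prop :=
  ∀ u, u ∈ Set.Ioc (0 : ℝ) 1 →
    (∀ x, 0 ≤ π u x) ∧ (∑ x : PopState G, π u x = 1) ∧
      ∀ y, π u y = ∑ x : PopState G, π u x * step p u ν x y

/-- `πR` is the rare-mutation conditional (RMC) distribution associated with
the MSS family `π`: for each non-monoallelic state `x`,
`πR x = lim_{u→0} π_MSS(x)/(1 − π_MSS(A) − π_MSS(a))`. -/
def IsRMC (π : ℝ → PopState G → ℝ) (πR : PopState G → ℝ) : Prop :=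
  ∀ x ∈ offStates G,
    Tendsto (fun u => π u x / (1 - π u Finset.univ - π u ∅))
      (nhdsWithin 0 (Set.Ioi 0)) (nhds (πR x))

end NatSel

open NatSel


section AuxStatement7

open Relation

private lemma foldr_chain {G : Type} (rel : G → G → Prop) :
    ∀ l : List (G → G), (∀ f ∈ l, ∀ a, ReflTransGen rel a (f a)) →
      ∀ h, ReflTransGen rel h (l.foldr (· ∘ ·) id h)
  | [], _, h => ReflTransGen.refl
  | f :: l, hl, h => by
    simp only [List.foldr_cons, Function.comp_apply]
    exact (foldr_chain rel l (fun f' hf => hl f' (List.mem_cons_of_mem _ hf)) h).trans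
      (hl f List.mem_cons_self _)

end AuxStatement7

/-- Theorem 7 of Allen & McAvoy: under neutral drift, the
RV-weighted change due to selection vanishes in every state; moreover the
reproductive values are the unique (up to constant multiples) site weighting
`ṽ` for which the `ṽ`-weighted change due to selection
`Δ̃_sel(x) = Σ_{g,h} x_g (e°_{gh} ṽ_h − e°_{hg} ṽ_g)` vanishes in every state. -/
theorem statement7
    {G : Type} [Fintype G] [DecidableEq G] [Nonempty G]
    (p : PopState G → RepEvent G → ℝ) (hrule : IsRule p) (hfix : FixationAxiom p)
    (hneut : NeutralDrift p)
    (v : G → ℝ) (hv : IsRepVal p v) :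
    (∀ x : PopState G, deltaHatSel p v x = 0) ∧
    (∀ vt : G → ℝ,
      (∀ x : PopState G,
        (∑ g, ∑ h, xg x g * (eMarg p g h ∅ * vt h - eMarg p h g ∅ * vt g)) = 0) →
      ∃ c : ℝ, ∀ g, vt g = c * v g) := by
  classical
  -- abbreviations
  set E : G → G → ℝ := fun g h => eMarg p g h ∅ with hEdef
  have hEnn : ∀ g h, 0 ≤ E g h := by
    intro g h
    refine Finset.sum_nonneg fun e _ => ?_
    split_ifs <;> first | exact hrule.1 _ _ | exact le_refl 0
  have hem : ∀ g h x, eMarg p g h x = E g h := by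
    intro g h x
    unfold eMarg
    simp only [hneut x]
    rfl
  have hd : ∀ g x, dProb p g x = ∑ h, E h g := by
    intro g x
    unfold dProb
    exact Finset.sum_congr rfl fun h _ => hem h g x
  have hbalance : ∀ g, dProb p g ∅ * v g = ∑ h, E g h * v h := hv.1
  constructor
  · -- Part 1
    intro x
    refine Finset.sum_eq_zero fun g _ => ?_
    have hb : bHat p v g x = ∑ h, E g h * v h :=
      Finset.sum_congr rfl fun h _ => by rw [hem g h x]
    have hdh : dHat p v g x = dProb p g ∅ * v g := by
      unfold dHat; rw [hd g x, ← hd g ∅]; ring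
    rw [hb, hdh, ← hbalance g, sub_self, mul_zero]
  · -- Part 2
    intro vt hvt
    -- the Laplacian matrix
    set Lm : Matrix G G ℝ :=
      Matrix.of (fun a b => (if a = b then dProb p a ∅ else 0) - E a b) with hLm
    have hmul : ∀ (w : G → ℝ) (a : G),
        Lm.mulVec w a = dProb p a ∅ * w a - ∑ h, E a h * w h := by
      intro w a
      simp only [hLm, Matrix.mulVec, dotProduct, Matrix.of_apply, sub_mul,
        Finset.sum_sub_distrib, ite_mul, zero_mul, Finset.sum_ite_eq, Finset.mem_univ,
        if_true]
    have hmulT : ∀ (u : G → ℝ) (h : G),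
        Lm.transpose.mulVec u h = dProb p h ∅ * u h - ∑ a, E a h * u a := by
      intro u h
      simp only [hLm, Matrix.mulVec, dotProduct, Matrix.transpose_apply,
        Matrix.of_apply, sub_mul, Finset.sum_sub_distrib, ite_mul, zero_mul]
      congr 1
      rw [Finset.sum_ite_eq']
      simp
    -- membership in the kernel of Lm
    have hvker : v ∈ LinearMap.ker Lm.mulVecLin := by
      rw [LinearMap.mem_ker]
      funext a
      show Lm.mulVec v a = 0
      rw [hmul, hbalance a, sub_self]
    have key : ∀ g0 : G, (∑ h, (E g0 h * vt h - E h g0 * vt g0)) = 0 := by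
      intro g0
      have h := hvt {g0}
      rw [Finset.sum_eq_single g0] at h
      · simpa [xg] using h
      · intro b _ hb
        refine Finset.sum_eq_zero fun h' _ => ?_
        simp [xg, hb]
      · simp
    have hvtker : vt ∈ LinearMap.ker Lm.mulVecLin := by
      rw [LinearMap.mem_ker]
      funext a
      show Lm.mulVec vt a = 0
      rw [hmul, hd a ∅]
      have h2 := key a
      rw [Finset.sum_sub_distrib] at h2
      rw [Finset.sum_mul]
      linarith [h2]
    -- paths to the fixation site
    obtain ⟨g, m, hm, ev, hp, -, hcomp⟩ := hfix
    have hstep : ∀ e : RepEvent G, 0 < p ∅ e → ∀ a,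
        Relation.ReflTransGen (fun c pc => 0 < E pc c) a (tildeMap e a) := by
      intro e he a
      unfold tildeMap
      by_cases hae : a ∈ e.1
      · rw [dif_pos hae]
        refine Relation.ReflTransGen.single ?_
        have hterm : ∀ e' : RepEvent G, (0:ℝ) ≤
            if hh : a ∈ e'.1 then (if e'.2 ⟨a, hh⟩ = e.2 ⟨a, hae⟩ then p ∅ e' else 0) else 0 := by
          intro e'
          split_ifs <;> first | exact hrule.1 _ _ | exact le_refl 0
        have hle : p ∅ e ≤ E (e.2 ⟨a, hae⟩) a := by
          have := Finset.single_le_sum (f := fun e' : RepEvent G =>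
            if hh : a ∈ e'.1 then (if e'.2 ⟨a, hh⟩ = e.2 ⟨a, hae⟩ then p ∅ e' else 0) else 0)
            (fun e' _ => hterm e') (Finset.mem_univ e)
          simp [hae] at this
          exact this
        exact lt_of_lt_of_le he hle
      · rw [dif_neg hae]
    have hpath : ∀ h, Relation.ReflTransGen (fun c pc => 0 < E pc c) h g := by
      intro h
      have hchain := foldr_chain (fun c pc => 0 < E pc c)
        (List.ofFn fun k => tildeMap (ev k)) ?_ h
      · rwa [hcomp h] at hchain
      · intro f hf a
        obtain ⟨k, rfl⟩ := List.mem_ofFn.1 hf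
        exact hstep _ (hp k ∅) a
    -- kernel of the transpose is the constants
    have hkerT : LinearMap.ker (Matrix.mulVecLin Lm.transpose)
        = Submodule.span ℝ {(fun _ => 1 : G → ℝ)} := by
      ext u
      simp only [LinearMap.mem_ker]
      constructor
      · intro hu
        have hharm : ∀ h, ∑ a, E a h * u a = dProb p h ∅ * u h := by
          intro h
          have h3 : Lm.transpose.mulVec u h = 0 := by
            rw [show Lm.transpose.mulVec u = 0 from hu]; rfl
          rw [hmulT] at h3
          linarith
        have hne : (Finset.univ : Finset G).Nonempty := Finset.univ_nonempty
        set Mx := Finset.univ.sup' hne u with hMx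
        set mn := Finset.univ.inf' hne u with hmn
        have hleM : ∀ a, u a ≤ Mx := fun a => Finset.le_sup' u (Finset.mem_univ a)
        have hgem : ∀ a, mn ≤ u a := fun a => Finset.inf'_le u (Finset.mem_univ a)
        have hclosedMax : ∀ h, u h = Mx → ∀ a, 0 < E a h → u a = Mx := by
          intro h hh a ha
          by_contra hcon
          have hlt : u a < Mx := lt_of_le_of_ne (hleM a) hcon
          have h1 : ∑ b, E b h * (Mx - u b) = 0 := by
            have h3 := hharm h
            have h4 := hd h ∅
            simp only [mul_sub, Finset.sum_sub_distrib, ← Finset.sum_mul]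
            rw [h3, ← h4, hh]
            ring
          have h5 := (Finset.sum_eq_zero_iff_of_nonneg
            (fun b _ => mul_nonneg (hEnn b h) (by linarith [hleM b]))).1 h1 a
            (Finset.mem_univ a)
          have : 0 < E a h * (Mx - u a) := mul_pos ha (by linarith)
          linarith
        have hclosedMin : ∀ h, u h = mn → ∀ a, 0 < E a h → u a = mn := by
          intro h hh a ha
          by_contra hcon
          have hlt : mn < u a := lt_of_le_of_ne (hgem a) (Ne.symm hcon)
          have h1 : ∑ b, E b h * (u b - mn) = 0 := by
            have h3 := hharm h
            have h4 := hd h ∅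
            simp only [mul_sub, Finset.sum_sub_distrib, ← Finset.sum_mul]
            rw [h3, ← h4, hh]
            ring
          have h5 := (Finset.sum_eq_zero_iff_of_nonneg
            (fun b _ => mul_nonneg (hEnn b h) (by linarith [hgem b]))).1 h1 a
            (Finset.mem_univ a)
          have : 0 < E a h * (u a - mn) := mul_pos ha (by linarith)
          linarith
        have propMax : ∀ a b, Relation.ReflTransGen (fun c pc => 0 < E pc c) a b →
            u a = Mx → u b = Mx := by
          intro a b hab
          induction hab with
          | refl => exact id
          | tail _ hyz ih => intro ha; exact hclosedMax _ (ih ha) _ hyz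
        have propMin : ∀ a b, Relation.ReflTransGen (fun c pc => 0 < E pc c) a b →
            u a = mn → u b = mn := by
          intro a b hab
          induction hab with
          | refl => exact id
          | tail _ hyz ih => intro ha; exact hclosedMin _ (ih ha) _ hyz
        obtain ⟨a0, -, ha0⟩ := Finset.exists_mem_eq_sup' hne u
        obtain ⟨a1, -, ha1⟩ := Finset.exists_mem_eq_inf' hne u
        have hgM : u g = Mx := propMax a0 g (hpath a0) ha0.symm
        have hgm : u g = mn := propMin a1 g (hpath a1) ha1.symm
        have hconst : ∀ a, u a = u g := by
          intro a
          have := hleM a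
          have := hgem a
          rw [hgM] at *
          rw [hgm] at *
          linarith
        refine Submodule.mem_span_singleton.2 ⟨u g, ?_⟩
        funext a
        simp [hconst a]
      · intro hu
        obtain ⟨c, rfl⟩ := Submodule.mem_span_singleton.1 hu
        funext h
        show Lm.transpose.mulVec _ h = 0
        rw [hmulT, hd h ∅]
        simp only [Pi.smul_apply, smul_eq_mul, mul_one]
        rw [Finset.sum_mul, sub_self]
    -- dimension count
    have hone : (fun _ => 1 : G → ℝ) ≠ 0 := by
      intro hcon
      have := congrFun hcon (Classical.arbitrary G)
      simp at this
    have hrank1 : Module.finrank ℝ (LinearMap.ker (Matrix.mulVecLin Lm.transpose)) = 1 := by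
      rw [hkerT]
      exact finrank_span_singleton hone
    have hcard : ∀ A : Matrix G G ℝ,
        A.rank + Module.finrank ℝ (LinearMap.ker A.mulVecLin) = Fintype.card G := by
      intro A
      have h6 := LinearMap.finrank_range_add_finrank_ker A.mulVecLin
      rwa [Module.finrank_fintype_fun_eq_card] at h6
    have hker1 : Module.finrank ℝ (LinearMap.ker Lm.mulVecLin) = 1 := by
      have h1 := hcard Lm
      have h2 := hcard Lm.transpose
      rw [Matrix.rank_transpose, hrank1] at h2
      omega
    have hvne : v ≠ 0 := by
      intro hcon
      have h7 := hv.2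
      rw [hcon] at h7
      simp only [Pi.zero_apply, Finset.sum_const_zero] at h7
      have h8 : (0:ℝ) < (Fintype.card G : ℝ) := Nat.cast_pos.2 Fintype.card_pos
      linarith
    have hspan : Submodule.span ℝ {v} = LinearMap.ker Lm.mulVecLin := by
      apply Submodule.eq_of_le_of_finrank_le
      · rwa [Submodule.span_singleton_le_iff_mem]
      · rw [hker1, finrank_span_singleton hvne]
    rw [← hspan] at hvtker
    obtain ⟨c, hc⟩ := Submodule.mem_span_singleton.1 hvtker
    exact ⟨c, fun g' => by rw [← hc]; simp [mul_comm]⟩
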